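/- Let μ be a compactly supported Borel probability measure on ℝ^d satisfying μ(B(x,r)) ≤ C r^s for all x ∈ ℝ^d and r > 0, where 0 < s ≤ d. Then for every f ∈ L²(μ) and every R ≥ 1, ∫_{|ξ| ≤ R} |(f dμ)^∧(ξ)|² dξ ≲ R^{d-s} ‖f‖²_{L²(μ)}, with implied constant independent of f and R. -/

import Mathlib

open MeasureTheory Real Set Metric
open scoped ENNReal RealInnerProductSpace

noncomputable section

/-- Euclidean space `ℝ^d`. -/
abbrev Euc (d : ℕ) := EuclideanSpace ℝ (Fin d)

/-- `e(r) = exp(2πir)`. -/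
noncomputable def eC (r : ℝ) : ℂ := Complex.exp (((2 * Real.pi * r : ℝ) : ℂ) * Complex.I)

/-- The normalized (probability) surface measure on the unit sphere `S^{d-1}`,
viewed as a measure on `ℝ^d`. -/
noncomputable def unitSphere (d : ℕ) : Measure (Euc d) :=
  (((volume : Measure (Euc d)).toSphere Set.univ)⁻¹) •
    Measure.map Subtype.val (volume : Measure (Euc d)).toSphere

/-- The normalized surface measure `ω_r` on the sphere `r S^{d-1}`. -/
noncomputable def sphM (d : ℕ) (r : ℝ) : Measure (Euc d) :=
  Measure.map (fun x => r • x) (unitSphere d)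

/-- The surface area `|S^{d-1}|` of the unit sphere. -/
noncomputable def sphArea (d : ℕ) : ℝ :=
  (((volume : Measure (Euc d)).toSphere) Set.univ).toReal

/-- The Fourier transform `μ̂(ξ) = ∫ e^{-2πi x·ξ} dμ(x)` of a measure on `ℝ^d`. -/
noncomputable def ftM {d : ℕ} (μ : Measure (Euc d)) (ξ : Euc d) : ℂ :=
  ∫ x, eC (-⟪x, ξ⟫) ∂μ

/-- The Fourier transform `(f dμ)^∧(ξ) = ∫ e^{-2πi x·ξ} f(x) dμ(x)`. -/
noncomputable def ftF {d : ℕ} (μ : Measure (Euc d)) (f : Euc d → ℂ) (ξ : Euc d) : ℂ :=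
  ∫ x, eC (-⟪x, ξ⟫) * f x ∂μ

lemma eC_norm (r : ℝ) : ‖eC r‖ = 1 := Complex.norm_exp_ofReal_mul_I _

lemma eC_conj (r : ℝ) : (starRingEnd ℂ) (eC r) = eC (-r) := by
  unfold eC
  rw [← Complex.exp_conj]
  congr 1
  rw [map_mul, Complex.conj_I, Complex.conj_ofReal]
  push_cast
  ring

lemma eC_mul (a b : ℝ) : eC a * eC b = eC (a + b) := by
  unfold eC; rw [← Complex.exp_add]; congr 1; push_cast; ring

lemma gauss_ft (d : ℕ) (R : ℝ) (hR : 0 < R) (v : Euc d) :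
    ∫ ξ : Euc d, (Real.exp (-(π / R ^ 2) * ‖ξ‖ ^ 2) : ℂ) * eC (-⟪v, ξ⟫)
      = ((R ^ d : ℝ) : ℂ) * Complex.exp (((-(π * R ^ 2 * ‖v‖ ^ 2)) : ℝ) : ℂ) := by
  have hb : (0:ℝ) < π / R ^ 2 := by positivity
  have hbC : 0 < ((((π / R ^ 2 : ℝ)) : ℂ)).re := by rw [Complex.ofReal_re]; exact hb
  have h := GaussianFourier.integral_cexp_neg_mul_sq_norm_add (V := Euc d) hbC (-(2 * π) * Complex.I) v
  have heq : ∀ ξ : Euc d,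
      (Real.exp (-(π / R ^ 2) * ‖ξ‖ ^ 2) : ℂ) * eC (-⟪v, ξ⟫)
        = Complex.exp (-(((π / R ^ 2 : ℝ)) : ℂ) * (‖ξ‖ : ℂ) ^ 2
            + (-(2 * π) * Complex.I) * (⟪v, ξ⟫ : ℂ)) := by
    intro ξ
    rw [eC, Complex.ofReal_exp, ← Complex.exp_add]
    congr 1
    push_cast
    ring
  rw [MeasureTheory.integral_congr_ae (Filter.Eventually.of_forall heq), h]
  have hd : (Module.finrank ℝ (Euc d)) = d := finrank_euclideanSpace_fin
  rw [hd]
  congr 1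
  · -- (π / b) ^ (d/2) = R^d
    have h1 : ((π : ℂ)) / (((π / R ^ 2 : ℝ)) : ℂ) = (((R ^ 2 : ℝ)) : ℂ) := by
      rw [← Complex.ofReal_div]
      congr 1
      field_simp
    rw [h1]
    have h2 : ((d : ℂ) / 2) = (((d / 2 : ℝ)) : ℂ) := by push_cast; ring
    rw [h2, ← Complex.ofReal_cpow (by positivity)]
    congr 1
    rw [← Real.rpow_natCast R d, ← Real.rpow_natCast R 2, ← Real.rpow_mul hR.le]
    ring_nf
  · -- exponent
    congr 1
    have hπ : (π : ℂ) ≠ 0 := Complex.ofReal_ne_zero.mpr pi_ne_zero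
    have hR2 : ((R:ℂ)) ^ 2 ≠ 0 := pow_ne_zero 2 (Complex.ofReal_ne_zero.mpr hR.ne')
    push_cast
    simp only [mul_pow, Complex.I_sq]
    field_simp
    ring




noncomputable def gSum (s : ℝ) : ℝ :=
  ∑' k : ℕ, Real.exp (-(π * (k : ℝ) ^ 2)) * ((k : ℝ) + 1) ^ s

lemma gSum_summable (s : ℝ) (hs : 0 ≤ s) :
    Summable (fun k : ℕ => Real.exp (-(π * (k : ℝ) ^ 2)) * ((k : ℝ) + 1) ^ s) := by
  set n := ⌈s⌉₊ with hn
  have hc : (0:ℝ) < Real.exp (-1) := Real.exp_pos _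
  have hc1 : Real.exp (-1) < 1 := by
    rw [Real.exp_lt_one_iff]; norm_num
  have hbig : Summable (fun k : ℕ => ((k : ℝ)) ^ n * (Real.exp (-1)) ^ k) :=
    summable_pow_mul_geometric_of_norm_lt_one n (by rw [Real.norm_eq_abs, abs_of_pos hc]; exact hc1)
  have hshift : Summable (fun k : ℕ => (((k : ℕ) + 1 : ℝ)) ^ n * (Real.exp (-1)) ^ (k + 1)) := by
    refine (hbig.comp_injective (add_left_injective 1)).congr fun k => ?_
    simp only [Function.comp]
    push_cast
    ring
  have hshift' : Summable (fun k : ℕ => (((k : ℝ)) + 1) ^ n * (Real.exp (-1)) ^ k) := by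
    have h2 := hshift.mul_left (Real.exp (-1))⁻¹
    refine h2.congr fun k => ?_
    rw [pow_succ]
    field_simp
  refine Summable.of_nonneg_of_le (fun k => by positivity) (fun k => ?_) hshift'
  have h1 : ((k:ℝ) + 1) ^ s ≤ ((k:ℝ) + 1) ^ (n : ℝ) := by
    apply Real.rpow_le_rpow_of_exponent_le (by norm_num) (Nat.le_ceil s)
  have h2 : Real.exp (-(π * (k : ℝ) ^ 2)) ≤ (Real.exp (-1)) ^ k := by
    rw [← Real.exp_nat_mul]
    apply Real.exp_le_exp.mpr
    have hπ : (1:ℝ) ≤ π := by linarith [Real.pi_gt_three]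
    have hkk : (k:ℝ) ≤ (k:ℝ)^2 := by
      have := Nat.le_self_pow (two_ne_zero) k
      exact_mod_cast this
    nlinarith [Nat.cast_nonneg (α := ℝ) k, sq_nonneg ((k:ℝ))]
  calc Real.exp (-(π * (k : ℝ) ^ 2)) * ((k : ℝ) + 1) ^ s
      ≤ (Real.exp (-1)) ^ k * ((k : ℝ) + 1) ^ (n:ℝ) := by
        apply mul_le_mul h2 h1 (by positivity) (by positivity)
    _ = ((k : ℝ) + 1) ^ n * (Real.exp (-1)) ^ k := by
        rw [Real.rpow_natCast]; ring

lemma one_le_gSum (s : ℝ) (hs : 0 ≤ s) : 1 ≤ gSum s := by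
  have hsum := gSum_summable s hs
  have h0 : Real.exp (-(π * (0:ℕ) ^ 2)) * (((0:ℕ):ℝ) + 1) ^ s = 1 := by
    norm_num
  calc (1:ℝ) = Real.exp (-(π * ((0:ℕ):ℝ) ^ 2)) * (((0:ℕ):ℝ) + 1) ^ s := by norm_num
    _ ≤ gSum s := Summable.le_tsum hsum 0 (fun k _ => by positivity)

lemma kernel_bound {d : ℕ} (μ : Measure (Euc d)) (s C : ℝ) (hs0 : 0 < s) (hC : 0 < C)
    (hfrost : ∀ (x : Euc d) (r : ℝ), 0 < r →
      μ (closedBall x r) ≤ ENNReal.ofReal (C * r ^ s))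
    (R : ℝ) (hR : 1 ≤ R) (x : Euc d) :
    ∫⁻ y, ENNReal.ofReal (Real.exp (-(π * R ^ 2 * ‖x - y‖ ^ 2))) ∂μ
      ≤ ENNReal.ofReal (C * gSum s / R ^ s) := by
  have hR0 : (0:ℝ) < R := lt_of_lt_of_le one_pos hR
  have key : ∀ y : Euc d, ENNReal.ofReal (Real.exp (-(π * R ^ 2 * ‖x - y‖ ^ 2)))
      ≤ ∑' k : ℕ, (closedBall x (((k:ℝ) + 1) / R)).indicator
          (fun _ => ENNReal.ofReal (Real.exp (-(π * (k:ℝ) ^ 2)))) y := by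
    intro y
    set t := ‖x - y‖ with ht
    have ht0 : 0 ≤ t := norm_nonneg _
    set k := ⌊R * t⌋₊ with hk
    have hk1 : (k : ℝ) ≤ R * t := Nat.floor_le (by positivity)
    have hk2 : R * t < (k : ℝ) + 1 := Nat.lt_floor_add_one _
    have hmem : y ∈ closedBall x (((k:ℝ) + 1) / R) := by
      rw [mem_closedBall, dist_comm, dist_eq_norm, ← ht]
      rw [le_div_iff₀ hR0, mul_comm]
      exact hk2.le
    calc ENNReal.ofReal (Real.exp (-(π * R ^ 2 * t ^ 2)))
        ≤ ENNReal.ofReal (Real.exp (-(π * (k:ℝ) ^ 2))) := by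
          apply ENNReal.ofReal_le_ofReal
          apply Real.exp_le_exp.mpr
          have : (k:ℝ)^2 ≤ (R*t)^2 := by nlinarith
          nlinarith [Real.pi_pos]
      _ = (closedBall x (((k:ℝ) + 1) / R)).indicator
            (fun _ => ENNReal.ofReal (Real.exp (-(π * (k:ℝ) ^ 2)))) y := by
          rw [Set.indicator_of_mem hmem]
      _ ≤ _ := ENNReal.le_tsum k
  calc ∫⁻ y, ENNReal.ofReal (Real.exp (-(π * R ^ 2 * ‖x - y‖ ^ 2))) ∂μ
      ≤ ∫⁻ y, ∑' k : ℕ, (closedBall x (((k:ℝ) + 1) / R)).indicator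
          (fun _ => ENNReal.ofReal (Real.exp (-(π * (k:ℝ) ^ 2)))) y ∂μ :=
        lintegral_mono key
    _ = ∑' k : ℕ, ∫⁻ y, (closedBall x (((k:ℝ) + 1) / R)).indicator
          (fun _ => ENNReal.ofReal (Real.exp (-(π * (k:ℝ) ^ 2)))) y ∂μ :=
        lintegral_tsum (fun k => (measurable_const.indicator measurableSet_closedBall).aemeasurable)
    _ = ∑' k : ℕ, ENNReal.ofReal (Real.exp (-(π * (k:ℝ) ^ 2))) * μ (closedBall x (((k:ℝ) + 1) / R)) := by
        congr 1; funext k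
        rw [lintegral_indicator measurableSet_closedBall]
        simp [mul_comm]
    _ ≤ ∑' k : ℕ, ENNReal.ofReal (Real.exp (-(π * (k:ℝ) ^ 2))) *
          ENNReal.ofReal (C * (((k:ℝ) + 1) / R) ^ s) := by
        refine ENNReal.tsum_le_tsum fun k => ?_
        exact mul_le_mul_right (hfrost x _ (by positivity)) _
    _ = ∑' k : ℕ, ENNReal.ofReal (C / R ^ s * (Real.exp (-(π * (k:ℝ) ^ 2)) * ((k:ℝ) + 1) ^ s)) := by
        congr 1; funext k
        rw [← ENNReal.ofReal_mul (by positivity)]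
        congr 1
        rw [Real.div_rpow (by positivity) hR0.le]
        ring
    _ = ENNReal.ofReal (∑' k : ℕ, C / R ^ s * (Real.exp (-(π * (k:ℝ) ^ 2)) * ((k:ℝ) + 1) ^ s)) := by
        rw [ENNReal.ofReal_tsum_of_nonneg (fun k => by positivity)
          ((gSum_summable s hs0.le).mul_left _)]
    _ = ENNReal.ofReal (C * gSum s / R ^ s) := by
        rw [tsum_mul_left]
        congr 1
        rw [gSum]
        ring

lemma eC_cont : Continuous eC := by
  unfold eC
  fun_prop

set_option maxHeartbeats 1000000 in
lemma main_aux (d : ℕ) (μ : Measure (Euc d)) [IsProbabilityMeasure μ]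
    (s C : ℝ) (hs0 : 0 < s) (hC : 0 < C)
    (hfrost : ∀ (x : Euc d) (r : ℝ), 0 < r →
      μ (closedBall x r) ≤ ENNReal.ofReal (C * r ^ s))
    (f : Euc d → ℂ) (hfm : StronglyMeasurable f) (hf : MemLp f 2 μ)
    (R : ℝ) (hR : 1 ≤ R) :
    ∫ ξ in closedBall (0 : Euc d) R, ‖ftF μ f ξ‖ ^ 2
      ≤ (Real.exp π * C * gSum s) * R ^ ((d : ℝ) - s) * ∫ x, ‖f x‖ ^ 2 ∂μ := by
  have hR0 : (0:ℝ) < R := lt_of_lt_of_le one_pos hR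
  set g := ftF μ f with hg
  have hfi : Integrable f μ := hf.integrable one_le_two
  have hfi2 : Integrable (fun x => ‖f x‖ ^ 2) μ := hf.norm.integrable_sq
  have hb0 : (0:ℝ) < π / R ^ 2 := by positivity
  set w : Euc d → ℝ := fun ξ => Real.exp (-(π / R ^ 2) * ‖ξ‖ ^ 2) with hw
  have hw_pos : ∀ ξ, 0 < w ξ := fun ξ => Real.exp_pos _
  have hw_cont : Continuous w := by
    rw [hw]; fun_prop
  have hw_int : Integrable w (volume : Measure (Euc d)) := by
    have h := (GaussianFourier.integrable_cexp_neg_mul_sq_norm_add (V := Euc d)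
      (b := ((π / R ^ 2 : ℝ) : ℂ)) (by rw [Complex.ofReal_re]; exact hb0) 0 0).norm
    apply h.congr
    filter_upwards with ξ
    rw [show (-((π / R ^ 2 : ℝ):ℂ) * ((‖ξ‖:ℂ)) ^ 2 + 0 * ((⟪(0:Euc d), ξ⟫ : ℝ):ℂ))
        = (((-(π / R ^ 2) * ‖ξ‖ ^ 2 : ℝ)):ℂ) from by push_cast; ring,
      ← Complex.ofReal_exp, Complex.norm_real, Real.norm_eq_abs,
      abs_of_pos (Real.exp_pos _)]
  have hgcont : Continuous g := by
    rw [hg]; unfold ftF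
    apply continuous_of_dominated (bound := fun x => ‖f x‖)
    · intro ξ
      exact ((eC_cont.comp ((continuous_id.inner continuous_const).neg)).stronglyMeasurable.mul hfm).aestronglyMeasurable
    · intro ξ
      filter_upwards with x
      rw [norm_mul, eC_norm, one_mul]
    · exact hfi.norm
    · filter_upwards with x
      exact Continuous.mul (eC_cont.comp ((continuous_const.inner continuous_id).neg)) continuous_const
  have hgbound : ∀ ξ, ‖g ξ‖ ≤ ∫ x, ‖f x‖ ∂μ := by
    intro ξ
    rw [hg]
    unfold ftF
    refine le_trans (norm_integral_le_integral_norm _) (le_of_eq ?_)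
    congr 1
    funext x
    rw [norm_mul, eC_norm, one_mul]
  set M := ∫ x, ‖f x‖ ∂μ with hM
  have hM0 : 0 ≤ M := integral_nonneg fun x => norm_nonneg _
  have hwg_int : Integrable (fun ξ => w ξ * ‖g ξ‖ ^ 2) (volume : Measure (Euc d)) := by
    refine Integrable.mono' (hw_int.const_mul (M ^ 2)) ?_ ?_
    · exact (hw_cont.mul (hgcont.norm.pow 2)).aestronglyMeasurable
    · filter_upwards with ξ
      rw [Real.norm_eq_abs, abs_of_nonneg (by positivity)]
      calc w ξ * ‖g ξ‖ ^ 2 ≤ w ξ * M ^ 2 := by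
            exact mul_le_mul_of_nonneg_left
              (pow_le_pow_left₀ (norm_nonneg _) (hgbound ξ) 2) (hw_pos ξ).le
        _ = M ^ 2 * w ξ := mul_comm _ _
  set J := ∫ ξ, w ξ * ‖g ξ‖ ^ 2 with hJ
  have hJ0 : 0 ≤ J := integral_nonneg fun ξ => by positivity
  have stepA : ∫ ξ in closedBall (0 : Euc d) R, ‖g ξ‖ ^ 2 ≤ Real.exp π * J := by
    have h1 : ∫ ξ in closedBall (0 : Euc d) R, ‖g ξ‖ ^ 2
        ≤ ∫ ξ in closedBall (0 : Euc d) R, Real.exp π * (w ξ * ‖g ξ‖ ^ 2) := by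
      refine setIntegral_mono_on
        (((hgcont.norm.pow 2).continuousOn).integrableOn_compact (isCompact_closedBall _ _))
        ((hwg_int.const_mul _).integrableOn) measurableSet_closedBall ?_
      intro ξ hξ
      have hξR : ‖ξ‖ ≤ R := by
        simpa [dist_eq_norm] using hξ
      have hwξ : Real.exp (-π) ≤ w ξ := by
        apply Real.exp_le_exp.mpr
        rw [neg_mul]
        apply neg_le_neg
        calc (π / R ^ 2) * ‖ξ‖ ^ 2 ≤ (π / R ^ 2) * R ^ 2 :=
              mul_le_mul_of_nonneg_left (pow_le_pow_left₀ (norm_nonneg _) hξR 2) hb0.le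
          _ = π := by field_simp
      have h1' : 1 ≤ Real.exp π * w ξ := by
        calc (1:ℝ) = Real.exp π * Real.exp (-π) := by rw [← Real.exp_add]; simp
          _ ≤ Real.exp π * w ξ := mul_le_mul_of_nonneg_left hwξ (Real.exp_pos π).le
      calc ‖g ξ‖ ^ 2 = 1 * ‖g ξ‖ ^ 2 := (one_mul _).symm
        _ ≤ (Real.exp π * w ξ) * ‖g ξ‖ ^ 2 := mul_le_mul_of_nonneg_right h1' (by positivity)
        _ = Real.exp π * (w ξ * ‖g ξ‖ ^ 2) := by ring
    have h2 : ∫ ξ in closedBall (0 : Euc d) R, Real.exp π * (w ξ * ‖g ξ‖ ^ 2)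
        ≤ ∫ ξ, Real.exp π * (w ξ * ‖g ξ‖ ^ 2) := by
      refine setIntegral_le_integral (hwg_int.const_mul _) ?_
      filter_upwards with ξ
      positivity
    simp only [integral_const_mul] at h1 h2
    linarith
  set Jc := ∫ ξ, ((w ξ : ℂ)) * (g ξ * (starRingEnd ℂ) (g ξ)) with hJc
  have hJcJ : Jc = (J : ℂ) := by
    rw [hJc, hJ]
    rw [show (∫ ξ, ((w ξ : ℂ)) * (g ξ * (starRingEnd ℂ) (g ξ)))
        = ∫ ξ, (((w ξ * ‖g ξ‖ ^ 2 : ℝ)) : ℂ) from integral_congr_ae (by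
      filter_upwards with ξ
      rw [Complex.mul_conj, Complex.normSq_eq_norm_sq]
      push_cast
      ring)]
    exact integral_ofReal
  have hJnormJc : J = ‖Jc‖ := by
    rw [hJcJ, Complex.norm_real, Real.norm_eq_abs, abs_of_nonneg hJ0]
  have hexpand : ∀ ξ, g ξ * (starRingEnd ℂ) (g ξ)
      = ∫ p : Euc d × Euc d, eC (-⟪p.1 - p.2, ξ⟫) * (f p.1 * (starRingEnd ℂ) (f p.2))
          ∂(μ.prod μ) := by
    intro ξ
    rw [hg]
    unfold ftF
    rw [← integral_conj, ← integral_prod_mul]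
    apply integral_congr_ae
    filter_upwards with p
    rw [map_mul, eC_conj]
    have heq : eC (-⟪p.1, ξ⟫) * eC (-(-⟪p.2, ξ⟫)) = eC (-⟪p.1 - p.2, ξ⟫) := by
      rw [eC_mul]
      congr 1
      rw [inner_sub_left]
      ring
    calc (eC (-⟪p.1, ξ⟫) * f p.1) * (eC (-(-⟪p.2, ξ⟫)) * (starRingEnd ℂ) (f p.2))
        = (eC (-⟪p.1, ξ⟫) * eC (-(-⟪p.2, ξ⟫))) * (f p.1 * (starRingEnd ℂ) (f p.2)) := by ring
      _ = _ := by rw [heq]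
  have hprod_int : Integrable (fun q : Euc d × (Euc d × Euc d) =>
      ((w q.1 : ℂ)) * (eC (-⟪q.2.1 - q.2.2, q.1⟫) * (f q.2.1 * (starRingEnd ℂ) (f q.2.2))))
      ((volume : Measure (Euc d)).prod (μ.prod μ)) := by
    have hdom : Integrable (fun q : Euc d × (Euc d × Euc d) => w q.1 * (‖f q.2.1‖ * ‖f q.2.2‖))
        ((volume : Measure (Euc d)).prod (μ.prod μ)) :=
      hw_int.mul_prod (hfi.norm.mul_prod hfi.norm)
    refine hdom.mono' ?_ ?_
    · have hc : Continuous fun q : Euc d × (Euc d × Euc d) =>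
          ((w q.1 : ℂ)) * eC (-⟪q.2.1 - q.2.2, q.1⟫) := by
        apply Continuous.mul
        · exact Complex.continuous_ofReal.comp (hw_cont.comp continuous_fst)
        · exact eC_cont.comp (Continuous.neg (Continuous.inner
            ((continuous_fst.comp continuous_snd).sub (continuous_snd.comp continuous_snd))
            continuous_fst))
      have hm1 : StronglyMeasurable fun q : Euc d × (Euc d × Euc d) => f q.2.1 :=
        hfm.comp_measurable (measurable_fst.comp measurable_snd)
      have hm2 : StronglyMeasurable fun q : Euc d × (Euc d × Euc d) =>
          (starRingEnd ℂ) (f q.2.2) :=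
        continuous_star.comp_stronglyMeasurable
          (hfm.comp_measurable (measurable_snd.comp measurable_snd))
      exact (hc.stronglyMeasurable.mul (hm1.mul hm2)).aestronglyMeasurable.congr
        (Filter.Eventually.of_forall fun q => by simp only [Pi.mul_apply]; ring)
    · filter_upwards with q
      rw [norm_mul, norm_mul, norm_mul, eC_norm, Complex.norm_real, Real.norm_eq_abs,
        abs_of_pos (hw_pos _), RCLike.norm_conj, one_mul]
  have hswap := integral_integral_swap (f := fun (ξ : Euc d) (p : Euc d × Euc d) =>
      ((w ξ : ℂ)) * (eC (-⟪p.1 - p.2, ξ⟫) * (f p.1 * (starRingEnd ℂ) (f p.2)))) hprod_int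
  have hJc2 : Jc = ∫ p : Euc d × Euc d, (f p.1 * (starRingEnd ℂ) (f p.2)) *
      (((R ^ d : ℝ) : ℂ) * Complex.exp (((-(π * R ^ 2 * ‖p.1 - p.2‖ ^ 2)) : ℝ) : ℂ))
      ∂(μ.prod μ) := by
    rw [hJc]
    calc ∫ ξ, ((w ξ : ℂ)) * (g ξ * (starRingEnd ℂ) (g ξ))
        = ∫ ξ, ∫ p : Euc d × Euc d, ((w ξ : ℂ)) *
            (eC (-⟪p.1 - p.2, ξ⟫) * (f p.1 * (starRingEnd ℂ) (f p.2))) ∂(μ.prod μ) := by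
          apply integral_congr_ae
          filter_upwards with ξ
          rw [hexpand ξ, integral_const_mul]
      _ = ∫ p : Euc d × Euc d, ∫ ξ, ((w ξ : ℂ)) *
            (eC (-⟪p.1 - p.2, ξ⟫) * (f p.1 * (starRingEnd ℂ) (f p.2))) ∂(volume : Measure (Euc d))
            ∂(μ.prod μ) := hswap
      _ = _ := by
          apply integral_congr_ae
          filter_upwards with p
          have h1 : ∫ ξ, ((w ξ : ℂ)) *
              (eC (-⟪p.1 - p.2, ξ⟫) * (f p.1 * (starRingEnd ℂ) (f p.2)))
              ∂(volume : Measure (Euc d))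
              = (∫ ξ, ((w ξ : ℂ)) * eC (-⟪p.1 - p.2, ξ⟫) ∂(volume : Measure (Euc d)))
                  * (f p.1 * (starRingEnd ℂ) (f p.2)) := by
            rw [← integral_mul_const]
            congr 1
            funext ξ
            ring
          rw [h1, hw]
          rw [gauss_ft d R hR0 (p.1 - p.2)]
          ring
  set A := ∫ x, ‖f x‖ ^ 2 ∂μ with hA
  have hA0 : 0 ≤ A := integral_nonneg fun x => by positivity
  set S := gSum s with hS
  have hS0 : (0:ℝ) ≤ S := le_trans zero_le_one (one_le_gSum s hs0.le)
  have hRs : (0:ℝ) < R ^ s := Real.rpow_pos_of_pos hR0 s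
  have hker : ∀ x : Euc d, ∫⁻ y, ENNReal.ofReal (Real.exp (-(π * R ^ 2 * ‖x - y‖ ^ 2))) ∂μ
      ≤ ENNReal.ofReal (C * S / R ^ s) := fun x => kernel_bound μ s C hs0 hC hfrost R hR x
  have hkm : Measurable fun p : Euc d × Euc d =>
      ENNReal.ofReal (Real.exp (-(π * R ^ 2 * ‖p.1 - p.2‖ ^ 2))) := by
    apply Measurable.ennreal_ofReal
    fun_prop
  have hfmn : Measurable fun x : Euc d => ‖f x‖ ^ 2 / 2 :=
    (hfm.norm.measurable.pow_const 2).div_const 2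
  have hfm1 : Measurable fun p : Euc d × Euc d => ENNReal.ofReal (‖f p.1‖ ^ 2 / 2) :=
    Measurable.ennreal_ofReal (hfmn.comp measurable_fst)
  have hfm2 : Measurable fun p : Euc d × Euc d => ENNReal.ofReal (‖f p.2‖ ^ 2 / 2) :=
    Measurable.ennreal_ofReal (hfmn.comp measurable_snd)
  have hintAf : ∫⁻ x, ENNReal.ofReal (‖f x‖ ^ 2 / 2) ∂μ = ENNReal.ofReal (A / 2) := by
    rw [← ofReal_integral_eq_lintegral_ofReal (hfi2.div_const 2)
      (Filter.Eventually.of_forall fun x => by positivity), integral_div]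
  have hb1 : ∫⁻ p : Euc d × Euc d, ENNReal.ofReal (‖f p.1‖ ^ 2 / 2) *
      (ENNReal.ofReal (R ^ d) * ENNReal.ofReal (Real.exp (-(π * R ^ 2 * ‖p.1 - p.2‖ ^ 2))))
      ∂(μ.prod μ)
      ≤ ENNReal.ofReal (A / 2) * (ENNReal.ofReal (R ^ d) * ENNReal.ofReal (C * S / R ^ s)) := by
    rw [lintegral_prod (f := fun p : Euc d × Euc d => ENNReal.ofReal (‖f p.1‖ ^ 2 / 2) * (ENNReal.ofReal (R ^ d) * ENNReal.ofReal (Real.exp (-(π * R ^ 2 * ‖p.1 - p.2‖ ^ 2))))) ((hfm1.mul (measurable_const.mul hkm))).aemeasurable]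
    calc ∫⁻ x, ∫⁻ y, ENNReal.ofReal (‖f x‖ ^ 2 / 2) *
            (ENNReal.ofReal (R ^ d) * ENNReal.ofReal (Real.exp (-(π * R ^ 2 * ‖x - y‖ ^ 2)))) ∂μ ∂μ
        ≤ ∫⁻ x, ENNReal.ofReal (‖f x‖ ^ 2 / 2) *
            (ENNReal.ofReal (R ^ d) * ENNReal.ofReal (C * S / R ^ s)) ∂μ := by
          apply lintegral_mono
          intro x
          dsimp only
          rw [lintegral_const_mul' _ _ ENNReal.ofReal_ne_top,
            lintegral_const_mul' _ _ ENNReal.ofReal_ne_top]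
          exact mul_le_mul_right (mul_le_mul_right (hker x) _) _
      _ = ENNReal.ofReal (A / 2) * (ENNReal.ofReal (R ^ d) * ENNReal.ofReal (C * S / R ^ s)) := by
          rw [lintegral_mul_const' _ _ (ENNReal.mul_ne_top ENNReal.ofReal_ne_top ENNReal.ofReal_ne_top), hintAf]
  have hb2 : ∫⁻ p : Euc d × Euc d, ENNReal.ofReal (‖f p.2‖ ^ 2 / 2) *
      (ENNReal.ofReal (R ^ d) * ENNReal.ofReal (Real.exp (-(π * R ^ 2 * ‖p.1 - p.2‖ ^ 2))))
      ∂(μ.prod μ)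
      ≤ ENNReal.ofReal (A / 2) * (ENNReal.ofReal (R ^ d) * ENNReal.ofReal (C * S / R ^ s)) := by
    rw [lintegral_prod_symm (f := fun p : Euc d × Euc d => ENNReal.ofReal (‖f p.2‖ ^ 2 / 2) * (ENNReal.ofReal (R ^ d) * ENNReal.ofReal (Real.exp (-(π * R ^ 2 * ‖p.1 - p.2‖ ^ 2))))) ((hfm2.mul (measurable_const.mul hkm))).aemeasurable]
    calc ∫⁻ y, ∫⁻ x, ENNReal.ofReal (‖f y‖ ^ 2 / 2) *
            (ENNReal.ofReal (R ^ d) * ENNReal.ofReal (Real.exp (-(π * R ^ 2 * ‖x - y‖ ^ 2)))) ∂μ ∂μ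
        ≤ ∫⁻ y, ENNReal.ofReal (‖f y‖ ^ 2 / 2) *
            (ENNReal.ofReal (R ^ d) * ENNReal.ofReal (C * S / R ^ s)) ∂μ := by
          apply lintegral_mono
          intro y
          dsimp only
          rw [lintegral_const_mul' _ _ ENNReal.ofReal_ne_top,
            lintegral_const_mul' _ _ ENNReal.ofReal_ne_top]
          refine mul_le_mul_right (mul_le_mul_right (le_trans (le_of_eq ?_) (hker y)) _) _
          apply lintegral_congr
          intro x
          rw [norm_sub_rev]
      _ = ENNReal.ofReal (A / 2) * (ENNReal.ofReal (R ^ d) * ENNReal.ofReal (C * S / R ^ s)) := by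
          rw [lintegral_mul_const' _ _ (ENNReal.mul_ne_top ENNReal.ofReal_ne_top ENNReal.ofReal_ne_top), hintAf]
  have hJcnorm : ‖Jc‖ ≤ R ^ d * (C * S / R ^ s) * A := by
    rw [hJc2]
    refine le_trans (norm_integral_le_lintegral_norm _) ?_
    have hchain : ∫⁻ p : Euc d × Euc d, ENNReal.ofReal ‖(f p.1 * (starRingEnd ℂ) (f p.2)) *
        (((R ^ d : ℝ) : ℂ) * Complex.exp (((-(π * R ^ 2 * ‖p.1 - p.2‖ ^ 2)) : ℝ) : ℂ))‖
        ∂(μ.prod μ) ≤ ENNReal.ofReal (R ^ d * (C * S / R ^ s) * A) := by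
      calc ∫⁻ p : Euc d × Euc d, ENNReal.ofReal ‖(f p.1 * (starRingEnd ℂ) (f p.2)) *
            (((R ^ d : ℝ) : ℂ) * Complex.exp (((-(π * R ^ 2 * ‖p.1 - p.2‖ ^ 2)) : ℝ) : ℂ))‖
            ∂(μ.prod μ)
          ≤ ∫⁻ p : Euc d × Euc d, (ENNReal.ofReal (‖f p.1‖ ^ 2 / 2) +
              ENNReal.ofReal (‖f p.2‖ ^ 2 / 2)) *
              (ENNReal.ofReal (R ^ d) *
                ENNReal.ofReal (Real.exp (-(π * R ^ 2 * ‖p.1 - p.2‖ ^ 2)))) ∂(μ.prod μ) := by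
            apply lintegral_mono
            intro p
            dsimp only
            rw [norm_mul, norm_mul, norm_mul, RCLike.norm_conj, Complex.norm_real,
              ← Complex.ofReal_exp, Complex.norm_real, Real.norm_eq_abs, Real.norm_eq_abs,
              abs_of_nonneg (by positivity : (0:ℝ) ≤ R ^ d),
              abs_of_pos (Real.exp_pos _)]
            rw [← ENNReal.ofReal_mul (by positivity), ← ENNReal.ofReal_add (by positivity)
              (by positivity), ← ENNReal.ofReal_mul (by positivity)]
            apply ENNReal.ofReal_le_ofReal
            have hab : ‖f p.1‖ * ‖f p.2‖ ≤ ‖f p.1‖ ^ 2 / 2 + ‖f p.2‖ ^ 2 / 2 := by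
              nlinarith [sq_nonneg (‖f p.1‖ - ‖f p.2‖)]
            have hc : (0:ℝ) ≤ R ^ d * Real.exp (-(π * R ^ 2 * ‖p.1 - p.2‖ ^ 2)) := by positivity
            exact mul_le_mul_of_nonneg_right hab hc
        _ = (∫⁻ p : Euc d × Euc d, ENNReal.ofReal (‖f p.1‖ ^ 2 / 2) *
              (ENNReal.ofReal (R ^ d) *
                ENNReal.ofReal (Real.exp (-(π * R ^ 2 * ‖p.1 - p.2‖ ^ 2)))) ∂(μ.prod μ)) +
            (∫⁻ p : Euc d × Euc d, ENNReal.ofReal (‖f p.2‖ ^ 2 / 2) *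
              (ENNReal.ofReal (R ^ d) *
                ENNReal.ofReal (Real.exp (-(π * R ^ 2 * ‖p.1 - p.2‖ ^ 2)))) ∂(μ.prod μ)) := by
            simp_rw [add_mul]
            rw [lintegral_add_left (f := fun p : Euc d × Euc d => ENNReal.ofReal (‖f p.1‖ ^ 2 / 2) * (ENNReal.ofReal (R ^ d) * ENNReal.ofReal (Real.exp (-(π * R ^ 2 * ‖p.1 - p.2‖ ^ 2))))) (hfm1.mul (measurable_const.mul hkm))]
        _ ≤ (ENNReal.ofReal (A / 2) * (ENNReal.ofReal (R ^ d) * ENNReal.ofReal (C * S / R ^ s)))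
            + (ENNReal.ofReal (A / 2) * (ENNReal.ofReal (R ^ d) * ENNReal.ofReal (C * S / R ^ s)))
            := add_le_add hb1 hb2
        _ = (ENNReal.ofReal (A / 2) + ENNReal.ofReal (A / 2)) *
              (ENNReal.ofReal (R ^ d) * ENNReal.ofReal (C * S / R ^ s)) := by ring
        _ = ENNReal.ofReal (R ^ d * (C * S / R ^ s) * A) := by
            rw [← ENNReal.ofReal_add (by linarith) (by linarith),
              ← ENNReal.ofReal_mul (pow_nonneg hR0.le d), ← ENNReal.ofReal_mul (by linarith)]
            congr 1
            ring
    exact ENNReal.toReal_le_of_le_ofReal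
      (mul_nonneg (mul_nonneg (pow_nonneg hR0.le d)
        (div_nonneg (mul_nonneg hC.le hS0) hRs.le)) hA0) hchain
  calc ∫ ξ in closedBall (0 : Euc d) R, ‖g ξ‖ ^ 2
      ≤ Real.exp π * J := stepA
    _ = Real.exp π * ‖Jc‖ := by rw [hJnormJc]
    _ ≤ Real.exp π * (R ^ d * (C * S / R ^ s) * A) :=
        mul_le_mul_of_nonneg_left hJcnorm (Real.exp_pos π).le
    _ = (Real.exp π * C * S) * R ^ ((d : ℝ) - s) * A := by
        rw [Real.rpow_sub hR0, ← Real.rpow_natCast R d]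
        field_simp

/-- If `μ` is a compactly supported probability measure with
`μ(B(x,r)) ≤ C r^s`, then `∫_{|ξ|≤R} |(f dμ)^∧|² ≲ R^{d-s} ‖f‖²_{L²(μ)}` for `R ≥ 1`. -/
theorem stmt1 (d : ℕ) (μ : Measure (Euc d)) [IsProbabilityMeasure μ]
    (K : Set (Euc d)) (hK : IsCompact K) (hsupp : μ Kᶜ = 0)
    (s C : ℝ) (hs0 : 0 < s) (hsd : s ≤ d) (hC : 0 < C)
    (hfrost : ∀ (x : Euc d) (r : ℝ), 0 < r →
      μ (closedBall x r) ≤ ENNReal.ofReal (C * r ^ s)) :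
    ∃ C' > 0, ∀ (f : Euc d → ℂ), MemLp f 2 μ → ∀ R ≥ (1:ℝ),
      ∫ ξ in closedBall (0 : Euc d) R, ‖ftF μ f ξ‖ ^ 2
        ≤ C' * R ^ ((d : ℝ) - s) * ∫ x, ‖f x‖ ^ 2 ∂μ := by
  have hS1 : (1:ℝ) ≤ gSum s := one_le_gSum s hs0.le
  refine ⟨Real.exp π * C * gSum s,
    mul_pos (mul_pos (Real.exp_pos π) hC) (lt_of_lt_of_le one_pos hS1), ?_⟩
  intro f hf R hR
  obtain ⟨f', hf'sm, hff'⟩ := hf.aestronglyMeasurable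
  have hf' : MemLp f' 2 μ := hf.ae_eq hff'
  have h1 : ∀ ξ, ftF μ f ξ = ftF μ f' ξ := fun ξ =>
    integral_congr_ae (hff'.mono fun x hx => by dsimp only; rw [hx])
  have h2 : ∫ x, ‖f x‖ ^ 2 ∂μ = ∫ x, ‖f' x‖ ^ 2 ∂μ :=
    integral_congr_ae (hff'.mono fun x hx => by dsimp only; rw [hx])
  calc ∫ ξ in closedBall (0 : Euc d) R, ‖ftF μ f ξ‖ ^ 2
      = ∫ ξ in closedBall (0 : Euc d) R, ‖ftF μ f' ξ‖ ^ 2 := by simp_rw [h1]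
    _ ≤ (Real.exp π * C * gSum s) * R ^ ((d : ℝ) - s) * ∫ x, ‖f' x‖ ^ 2 ∂μ :=
        main_aux d μ s C hs0 hC hfrost f' hf'sm hf' R hR
    _ = _ := by rw [← h2]
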